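/- Let p and q be probability mass functions on a nonempty finite type A with q(a) > 0 for all a, and let f : A → ℝ satisfy |f(a)| ≤ M for all a. Then |Σ_{a ∈ A} p(a) f(a) − Σ_{a ∈ A} q(a) f(a)| ≤ M · √(2 · D_KL(p‖q)). -/

import Mathlib

open scoped BigOperators

/-- Kullback–Leibler divergence between probability mass functions on a finite
type (with the convention `0 · log 0 = 0`, automatic since `Real.log 0 = 0`). -/
noncomputable def klFin {A : Type*} [Fintype A] (p q : A → ℝ) : ℝ :=
  ∑ a : A, p a * Real.log (p a / q a)


/-- The pointwise function whose nonnegativity gives Pinsker. -/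
noncomputable def pinskerAux (t : ℝ) : ℝ :=
  t * Real.log t - t + 1 - 3 * (t - 1) ^ 2 / (2 * (t + 2))

noncomputable def pinskerAux' (t : ℝ) : ℝ :=
  Real.log t - 3 * (t - 1) * (t + 5) / (2 * (t + 2) ^ 2)

lemma hasDerivAt_pinskerAux {t : ℝ} (ht : 0 < t) :
    HasDerivAt pinskerAux (pinskerAux' t) t := by
  have h2 : (2 * (t + 2)) ≠ 0 := by positivity
  have h1 : HasDerivAt (fun t : ℝ => t * Real.log t - t + 1) (Real.log t) t := by
    have h := (((hasDerivAt_id t).mul (Real.hasDerivAt_log ht.ne')).sub (hasDerivAt_id t)).add_const 1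
    refine h.congr_deriv ?_
    simp [ht.ne']
  have hnum : HasDerivAt (fun t : ℝ => 3 * (t - 1) ^ 2) (3 * (2 * (t - 1))) t := by
    simpa using (((hasDerivAt_id t).sub_const 1).pow 2).const_mul 3
  have hden : HasDerivAt (fun t : ℝ => 2 * (t + 2)) 2 t := by
    simpa using ((hasDerivAt_id t).add_const 2).const_mul 2
  have h3 := hnum.div hden h2
  have := h1.sub h3
  refine this.congr_deriv ?_
  unfold pinskerAux'
  field_simp
  ring

lemma hasDerivAt_pinskerAux' {t : ℝ} (ht : 0 < t) :
    HasDerivAt pinskerAux' ((t - 1) ^ 2 * (t + 8) / (t * (t + 2) ^ 3)) t := by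
  have h2 : (2 * (t + 2) ^ 2) ≠ 0 := by positivity
  have hlog := Real.hasDerivAt_log ht.ne'
  have hnum : HasDerivAt (fun t : ℝ => 3 * (t - 1) * (t + 5)) (3 * (t + 5) + 3 * (t - 1)) t := by
    have := ((((hasDerivAt_id t).sub_const 1).const_mul 3).mul ((hasDerivAt_id t).add_const 5))
    refine this.congr_deriv ?_
    simp only [id_eq, mul_one, one_mul]
  have hden : HasDerivAt (fun t : ℝ => 2 * (t + 2) ^ 2) (2 * (2 * (t + 2))) t := by
    simpa using (((hasDerivAt_id t).add_const 2).pow 2).const_mul 2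
  have := hlog.sub (hnum.div hden h2)
  refine this.congr_deriv ?_
  have h : t * (t + 2) ^ 3 ≠ 0 := by positivity
  field_simp
  ring

lemma pinskerAux'_mono : MonotoneOn pinskerAux' (Set.Ioi 0) := by
  refine monotoneOn_of_deriv_nonneg (convex_Ioi 0)
    (fun x hx => (hasDerivAt_pinskerAux' hx).continuousAt.continuousWithinAt)
    (fun x hx => ?_) (fun x hx => ?_)
  · rw [interior_Ioi] at hx
    exact (hasDerivAt_pinskerAux' hx).differentiableAt.differentiableWithinAt
  · rw [interior_Ioi] at hx
    rw [(hasDerivAt_pinskerAux' hx).deriv]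
    have hx : (0:ℝ) < x := hx
    positivity

lemma pinskerAux'_one : pinskerAux' 1 = 0 := by
  unfold pinskerAux'
  norm_num

lemma pinskerAux_one : pinskerAux 1 = 0 := by
  unfold pinskerAux
  norm_num

lemma pinskerAux_nonneg {t : ℝ} (ht : 0 ≤ t) : 0 ≤ pinskerAux t := by
  rcases eq_or_lt_of_le ht with h | h
  · unfold pinskerAux
    rw [← h]
    norm_num
  rcases le_total t 1 with h1 | h1
  · -- antitone on Ioc 0 1
    have hanti : AntitoneOn pinskerAux (Set.Ioc 0 1) := by
      refine antitoneOn_of_deriv_nonpos (convex_Ioc 0 1)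
        (fun x hx => (hasDerivAt_pinskerAux hx.1).continuousAt.continuousWithinAt)
        (fun x hx => ?_) (fun x hx => ?_)
      · rw [interior_Ioc] at hx
        exact (hasDerivAt_pinskerAux hx.1).differentiableAt.differentiableWithinAt
      · rw [interior_Ioc] at hx
        rw [(hasDerivAt_pinskerAux hx.1).deriv]
        have := pinskerAux'_mono (Set.mem_Ioi.mpr hx.1) (Set.mem_Ioi.mpr one_pos) hx.2.le
        rw [pinskerAux'_one] at this
        exact this
    have := hanti (Set.mem_Ioc.mpr ⟨h, h1⟩) (Set.mem_Ioc.mpr ⟨one_pos, le_refl 1⟩) h1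
    rw [pinskerAux_one] at this
    exact this
  · have hmono : MonotoneOn pinskerAux (Set.Ici 1) := by
      refine monotoneOn_of_deriv_nonneg (convex_Ici 1)
        (fun x hx => (hasDerivAt_pinskerAux (lt_of_lt_of_le one_pos hx)).continuousAt.continuousWithinAt)
        (fun x hx => ?_) (fun x hx => ?_)
      · rw [interior_Ici] at hx
        exact (hasDerivAt_pinskerAux (lt_trans one_pos hx)).differentiableAt.differentiableWithinAt
      · rw [interior_Ici] at hx
        rw [(hasDerivAt_pinskerAux (lt_trans one_pos hx)).deriv]
        have := pinskerAux'_mono (Set.mem_Ioi.mpr one_pos) (Set.mem_Ioi.mpr (lt_trans one_pos hx)) hx.le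
        rw [pinskerAux'_one] at this
        exact this
    have := hmono (Set.mem_Ici.mpr (le_refl 1)) (Set.mem_Ici.mpr h1) h1
    rw [pinskerAux_one] at this
    exact this

lemma pinsker_pointwise {p q : ℝ} (hp : 0 ≤ p) (hq : 0 < q) :
    3 * (p - q) ^ 2 / (2 * (p + 2 * q)) ≤ p * Real.log (p / q) - p + q := by
  have h := pinskerAux_nonneg (div_nonneg hp hq.le)
  unfold pinskerAux at h
  have h2 := mul_nonneg hq.le h
  have hq' : q ≠ 0 := hq.ne'
  have hpq : (0:ℝ) < p + 2 * q := by linarith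
  have key : q * (p / q * Real.log (p / q) - p / q + 1 -
      3 * (p / q - 1) ^ 2 / (2 * (p / q + 2))) =
      p * Real.log (p / q) - p + q - 3 * (p - q) ^ 2 / (2 * (p + 2 * q)) := by
    field_simp
  rw [key] at h2
  linarith

/-- for pmfs `p, q` with `q > 0` and `|f| ≤ M`,
`|E_p f − E_q f| ≤ M · √(2 · D_KL(p‖q))`. -/
theorem abs_expectation_sub_le_sqrt_kl
    {A : Type*} [Fintype A] [Nonempty A]
    (p q : A → ℝ)
    (hp0 : ∀ a, 0 ≤ p a) (hp1 : ∑ a : A, p a = 1)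
    (hq0 : ∀ a, 0 < q a) (hq1 : ∑ a : A, q a = 1)
    (f : A → ℝ) (M : ℝ) (hf : ∀ a, |f a| ≤ M) :
    |∑ a : A, p a * f a - ∑ a : A, q a * f a| ≤ M * Real.sqrt (2 * klFin p q) := by
  have hM : 0 ≤ M := le_trans (abs_nonneg _) (hf (Classical.arbitrary A))
  set S := ∑ a : A, |p a - q a| with hS
  have hS0 : 0 ≤ S := Finset.sum_nonneg fun a _ => abs_nonneg _
  -- step 1 : KL lower bound
  have hkl : S ^ 2 ≤ 2 * klFin p q := by
    have hsum3 : ∑ a : A, (p a + 2 * q a) = 3 := by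
      rw [Finset.sum_add_distrib, ← Finset.mul_sum, hp1, hq1]; norm_num
    have hCS := Finset.sq_sum_div_le_sum_sq_div Finset.univ (fun a => |p a - q a|)
      (g := fun a => p a + 2 * q a) (fun a _ => by have h1 := hp0 a; have h2 := hq0 a; linarith)
    rw [hsum3] at hCS
    simp only [sq_abs] at hCS
    have hterm : ∀ a : A, 3 * (p a - q a) ^ 2 / (2 * (p a + 2 * q a)) ≤
        p a * Real.log (p a / q a) - p a + q a :=
      fun a => pinsker_pointwise (hp0 a) (hq0 a)
    have hsum : ∑ a : A, 3 * (p a - q a) ^ 2 / (2 * (p a + 2 * q a)) ≤ klFin p q := by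
      calc ∑ a : A, 3 * (p a - q a) ^ 2 / (2 * (p a + 2 * q a))
          ≤ ∑ a : A, (p a * Real.log (p a / q a) - p a + q a) :=
            Finset.sum_le_sum fun a _ => hterm a
        _ = klFin p q := by
            simp only [Finset.sum_add_distrib, Finset.sum_sub_distrib, hp1, hq1, klFin]
            try ring
    have heq : ∑ a : A, 3 * (p a - q a) ^ 2 / (2 * (p a + 2 * q a)) =
        (3 / 2) * ∑ a : A, (p a - q a) ^ 2 / (p a + 2 * q a) := by
      rw [Finset.mul_sum]
      refine Finset.sum_congr rfl fun a _ => ?_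
      have : p a + 2 * q a > 0 := by have := hp0 a; have := hq0 a; linarith
      field_simp
      try ring
    rw [heq] at hsum
    nlinarith [hCS, hsum]
  have hklnn : 0 ≤ 2 * klFin p q := le_trans (sq_nonneg S) hkl
  have hsqrt : S ≤ Real.sqrt (2 * klFin p q) := (Real.le_sqrt hS0 hklnn).mpr hkl
  calc |∑ a : A, p a * f a - ∑ a : A, q a * f a|
      = |∑ a : A, (p a - q a) * f a| := by
        rw [← Finset.sum_sub_distrib]
        congr 1
        exact Finset.sum_congr rfl fun a _ => by ring
    _ ≤ ∑ a : A, |(p a - q a) * f a| := Finset.abs_sum_le_sum_abs _ _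
    _ ≤ ∑ a : A, |p a - q a| * M := by
        refine Finset.sum_le_sum fun a _ => ?_
        rw [abs_mul]
        exact mul_le_mul_of_nonneg_left (hf a) (abs_nonneg _)
    _ = S * M := by rw [← Finset.sum_mul]
    _ ≤ Real.sqrt (2 * klFin p q) * M := mul_le_mul_of_nonneg_right hsqrt hM
    _ = M * Real.sqrt (2 * klFin p q) := mul_comm _ _
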